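/- Let R be a commutative ring and let P, Q be polynomials in the variable x whose coefficients are polynomials in a second variable y (elements of Polynomial (Polynomial R)). Let m = natDegree P and m′ = natDegree Q, and let p, p′ be natural numbers such that for every natural number j the degree in y of the coefficient of xʲ in P is at most p + (m − j), and the degree in y of the coefficient of xʲ in Q is at most p′ + (m′ − j). Then the degree in y of the resultant Res(P, Q) satisfies natDegree(Res(P, Q)) ≤ m·m′ + m·p′ + m′·p. -/

import Mathlib

open Polynomial

/-- The Sylvester matrix of two polynomials `P` and `Q` over a commutative ring:
a square matrix of size `natDegree P + natDegree Q` whose first `natDegree Q` rows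
are the coefficient vectors of `X ^ i * P` (for `0 ≤ i < natDegree Q`) and whose
remaining rows are the coefficient vectors of `X ^ i * Q` (for `0 ≤ i < natDegree P`). -/
noncomputable def sylvesterMatrix {R : Type*} [CommRing R] (P Q : Polynomial R) :
    Matrix (Fin (P.natDegree + Q.natDegree)) (Fin (P.natDegree + Q.natDegree)) R :=
  fun i j =>
    if (i : ℕ) < Q.natDegree then (X ^ (i : ℕ) * P).coeff j
    else (X ^ ((i : ℕ) - Q.natDegree) * Q).coeff j

/-- The resultant of two polynomials: the determinant of their Sylvester matrix. -/
noncomputable def resultant {R : Type*} [CommRing R] (P Q : Polynomial R) : R :=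
  (sylvesterMatrix P Q).det

private lemma sum_ite_aux (a b : ℕ) (A B : ℤ) :
    (∑ i ∈ Finset.range (a + b), (if i < a then A + i else B + i)) =
      a * A + b * B + ∑ i ∈ Finset.range (a + b), (i : ℤ) := by
  induction b with
  | zero =>
    simp only [Nat.add_zero, Nat.cast_zero, zero_mul, add_zero]
    rw [Finset.sum_congr rfl (fun i hi => if_pos (Finset.mem_range.mp hi)),
      Finset.sum_add_distrib, Finset.sum_const, Finset.card_range]
    ring
  | succ k ih =>
    rw [Nat.add_succ, Finset.sum_range_succ, Finset.sum_range_succ, ih,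
      if_neg (by omega)]
    push_cast; ring


/-- Bézout (1764): if `P`, `Q` are polynomials in `x` of degrees `m`, `m′` whose
coefficients are polynomials in `y`, the coefficient of `x ^ j` in `P` (resp. `Q`)
having degree at most `p + (m - j)` (resp. `p′ + (m′ - j)`) in `y`, then the
resultant (eliminating `x`) is a polynomial in `y` of degree at most
`m·m′ + m·p′ + m′·p`. -/
theorem natDegree_resultant_le {R : Type*} [CommRing R]
    (P Q : Polynomial (Polynomial R)) (p p' : ℕ)
    (hP : ∀ j : ℕ, (P.coeff j).natDegree ≤ p + (P.natDegree - j))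
    (hQ : ∀ j : ℕ, (Q.coeff j).natDegree ≤ p' + (Q.natDegree - j)) :
    (_root_.resultant P Q).natDegree ≤
      P.natDegree * Q.natDegree + P.natDegree * p' + Q.natDegree * p := by
  set m := P.natDegree with hm
  set m' := Q.natDegree with hm'
  set G := m * m' + m * p' + m' * p with hG
  set M := sylvesterMatrix P Q with hM
  set g : Fin (m + m') → ℤ :=
    fun r => if (r : ℕ) < m' then ((p : ℤ) + m) + r else (p' : ℤ) + r with hg
  have entry : ∀ r c : Fin (m + m'), M r c ≠ 0 →
      ((M r c).natDegree : ℤ) ≤ g r - c := by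
    intro r c h
    rw [hM, sylvesterMatrix] at h ⊢
    simp only [show Q.natDegree = m' from rfl, show P.natDegree = m from rfl] at h ⊢
    rw [hg]
    by_cases hr : (r : ℕ) < m'
    · simp only [hr, if_true, coeff_X_pow_mul'] at h ⊢
      by_cases hrc : (r : ℕ) ≤ c
      · simp only [hrc, if_true] at h ⊢
        have h1 : (c : ℕ) - r ≤ m := by
          by_contra hc
          exact h (coeff_eq_zero_of_natDegree_lt (by omega))
        have h2 := hP ((c : ℕ) - r)
        omega
      · simp [hrc] at h
    · simp only [hr, if_false, coeff_X_pow_mul'] at h ⊢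
      by_cases hrc : (r : ℕ) - m' ≤ c
      · simp only [hrc, if_true] at h ⊢
        have h1 : (c : ℕ) - ((r : ℕ) - m') ≤ m' := by
          by_contra hc
          exact h (coeff_eq_zero_of_natDegree_lt (by omega))
        have h2 := hQ ((c : ℕ) - ((r : ℕ) - m'))
        omega
      · simp [hrc] at h
  have gsum : ∑ r : Fin (m + m'), g r = (G : ℤ) + ∑ r : Fin (m + m'), (r : ℤ) := by
    rw [hg, hG,
      Fin.sum_univ_eq_sum_range (fun r => if r < m' then ((p : ℤ) + m) + r else (p' : ℤ) + r),
      Fin.sum_univ_eq_sum_range (fun r => (r : ℤ)), Nat.add_comm m m', sum_ite_aux]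
    push_cast; ring
  rw [_root_.resultant, Matrix.det_apply', ← hM]
  apply natDegree_sum_le_of_forall_le
  intro σ _
  refine le_trans natDegree_mul_le ?_
  rw [natDegree_intCast, zero_add]
  by_cases hz : (∏ i, M (σ i) i) = 0
  · simp [hz]
  have hne : ∀ i : Fin (m + m'), M (σ i) i ≠ 0 := by
    intro i hi
    exact hz (Finset.prod_eq_zero (Finset.mem_univ i) hi)
  refine le_trans (natDegree_prod_le _ _) ?_
  have key : (∑ i : Fin (m + m'), ((M (σ i) i).natDegree : ℤ)) ≤ G := by
    calc (∑ i : Fin (m + m'), ((M (σ i) i).natDegree : ℤ))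
        ≤ ∑ i : Fin (m + m'), (g (σ i) - i) :=
          Finset.sum_le_sum fun i _ => entry _ _ (hne i)
      _ = ∑ i : Fin (m + m'), g (σ i) - ∑ i : Fin (m + m'), (i : ℤ) := by
          rw [Finset.sum_sub_distrib]
      _ = ∑ r : Fin (m + m'), g r - ∑ i : Fin (m + m'), (i : ℤ) := by
          rw [Equiv.sum_comp σ g]
      _ = G := by rw [gsum]; ring
  exact_mod_cast key
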